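/- arXiv:math/0701291 — 6 statements merged into one kernel-verified Lean document; each statement's English description precedes it below -/
import Mathlib

section
/- Let q be a prime power, F_q the finite field with q elements, A = F_q[T], and for nonzero n ∈ A write |n| = q^{deg n}. Let Λ be a free A-module of rank r ≥ 1 and let n ∈ A be monic and nonconstant or constant nonzero. Then the number of A-submodules Λ̃ ⊆ Λ with Λ/Λ̃ isomorphic (as A-module) to A/nA equals |n|^{r-1} · ∏_{p | n} (|p|^r − 1)/(|p|^r − |p|^{r-1}), where the product runs over the monic irreducible divisors p of n. -/
open Polynomial UniqueFactorizationMonoid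

section Key
variable {A M R : Type*} [CommRing A] [AddCommGroup M] [Module A M] [AddCommGroup R] [Module A R]

open LinearMap Submodule

/-- Surjections M → R are in bijection with (submodules with quotient ≅ R) × Aut(R). -/
noncomputable def surjEquiv :
    ({N : Submodule A M // Nonempty ((M ⧸ N) ≃ₗ[A] R)} × (R ≃ₗ[A] R)) ≃
      {φ : M →ₗ[A] R // Function.Surjective φ} := by
  classical
  have w : ∀ N : {N : Submodule A M // Nonempty ((M ⧸ N) ≃ₗ[A] R)}, (M ⧸ N.1) ≃ₗ[A] R :=
    fun N => N.2.some
  refine Equiv.ofBijective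
    (fun P => ⟨(P.2.toLinearMap.comp (w P.1).toLinearMap).comp P.1.1.mkQ, ?_⟩) ⟨?_, ?_⟩
  · exact P.2.surjective.comp ((w P.1).surjective.comp (Submodule.mkQ_surjective _))
  · rintro ⟨⟨N, hN⟩, u⟩ ⟨⟨N', hN'⟩, u'⟩ h
    have h' := Subtype.ext_iff.mp h
    dsimp only at h'
    have hker : ∀ (N₀ : {N : Submodule A M // Nonempty ((M ⧸ N) ≃ₗ[A] R)}) (u₀ : R ≃ₗ[A] R),
        LinearMap.ker ((u₀.toLinearMap.comp (w N₀).toLinearMap).comp N₀.1.mkQ) = N₀.1 := by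
      intro N₀ u₀
      rw [LinearMap.ker_comp, LinearMap.ker_comp, LinearMap.ker_eq_bot.mpr u₀.injective,
        Submodule.comap_bot, LinearMap.ker_eq_bot.mpr (w N₀).injective, Submodule.comap_bot,
        Submodule.ker_mkQ]
    have hNN' : N = N' := by
      have := hker ⟨N, hN⟩ u
      rw [h'] at this
      exact ((hker ⟨N', hN'⟩ u').symm.trans this).symm
    subst hNN'
    have hu : u = u' := by
      apply LinearEquiv.toLinearMap_injective
      apply LinearMap.ext
      intro x
      obtain ⟨y, rfl⟩ := (w ⟨N, hN⟩).surjective x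
      obtain ⟨m, rfl⟩ := Submodule.mkQ_surjective N y
      exact LinearMap.congr_fun h' m
    simp [hu]
  · rintro ⟨φ, hφ⟩
    set iso : (M ⧸ LinearMap.ker φ) ≃ₗ[A] R :=
      LinearEquiv.ofBijective ((LinearMap.ker φ).liftQ φ le_rfl)
        ⟨by rw [← LinearMap.ker_eq_bot]; exact Submodule.ker_liftQ_eq_bot _ _ _ le_rfl,
         fun x => by obtain ⟨m, rfl⟩ := hφ x; exact ⟨Submodule.Quotient.mk m, by simp⟩⟩ with hiso
    refine ⟨⟨⟨LinearMap.ker φ, ⟨iso⟩⟩, (w ⟨LinearMap.ker φ, ⟨iso⟩⟩).symm.trans iso⟩, ?_⟩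
    apply Subtype.ext
    apply LinearMap.ext
    intro m
    simp [hiso]
    rfl
end Key

section Aut
variable {A : Type*} [CommRing A] (I : Ideal A)

lemma quot_smul_eq (a : A) (y : A ⧸ I) : a • y = Ideal.Quotient.mk I a * y := by
  rw [Algebra.smul_def, Ideal.Quotient.algebraMap_eq]

lemma quot_linear_apply_eq (f : (A ⧸ I) →ₗ[A] (A ⧸ I)) (x : A ⧸ I) : f x = x * f 1 := by
  obtain ⟨a, rfl⟩ := Ideal.Quotient.mk_surjective x
  have h1 : (Ideal.Quotient.mk I a) = a • (1 : A ⧸ I) := by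
    rw [quot_smul_eq, mul_one]
  conv_lhs => rw [h1]
  rw [map_smul, quot_smul_eq, h1]

noncomputable def autEquivUnits : ((A ⧸ I) ≃ₗ[A] (A ⧸ I)) ≃ {x : A ⧸ I // IsUnit x} where
  toFun f := ⟨f 1, isUnit_iff_exists_inv.mpr ⟨f.symm 1, by
    have h := quot_linear_apply_eq I f.toLinearMap (f.symm 1)
    simp only [LinearEquiv.coe_coe, LinearEquiv.apply_symm_apply] at h
    rw [mul_comm]; exact h.symm⟩⟩
  invFun x :=
    LinearEquiv.ofLinear (LinearMap.mulLeft A (x.2.unit : A ⧸ I))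
      (LinearMap.mulLeft A ((x.2.unit⁻¹ : _) : A ⧸ I))
      (by ext z; simp [LinearMap.mulLeft_apply, ← mul_assoc])
      (by ext z; simp [LinearMap.mulLeft_apply, ← mul_assoc])
  left_inv f := by
    apply LinearEquiv.ext
    intro z
    simp only [LinearEquiv.ofLinear_apply, LinearMap.mulLeft_apply, IsUnit.unit_spec]
    rw [mul_comm]
    exact (quot_linear_apply_eq I f.toLinearMap z).symm
  right_inv x := by
    apply Subtype.ext
    simp [LinearEquiv.ofLinear_apply, LinearMap.mulLeft_apply]

end Aut

section Local
variable {A : Type*} [CommRing A] [IsDomain A] [IsPrincipalIdealRing A]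
variable {p : A} (hp : Prime p) {e : ℕ} (he : 1 ≤ e)

local notation "Rpe" => A ⧸ Ideal.span ({p ^ e} : Set A)
local notation "mkp" => Ideal.Quotient.mk (Ideal.span ({p ^ e} : Set A))

include hp he

lemma mem_J_iff (a : A) :
    mkp a ∈ Ideal.span ({mkp p} : Set Rpe) ↔ p ∣ a := by
  rw [Ideal.mem_span_singleton']
  constructor
  · rintro ⟨c, hc⟩
    obtain ⟨b, rfl⟩ := Ideal.Quotient.mk_surjective c
    rw [← map_mul, Ideal.Quotient.mk_eq_mk_iff_sub_mem, Ideal.mem_span_singleton] at hc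
    obtain ⟨d, hd⟩ := hc
    have : a = b * p - p ^ e * d := by linear_combination -hd
    rw [this]
    exact dvd_sub (Dvd.intro_left b rfl) (Dvd.dvd.mul_right (dvd_pow_self p (by omega)) d)
  · rintro ⟨c, rfl⟩
    exact ⟨mkp c, by rw [← map_mul, mul_comm]⟩

lemma isUnit_mk_iff (a : A) : IsUnit (mkp a) ↔ ¬ p ∣ a := by
  constructor
  · rintro h hdvd
    obtain ⟨y, hy⟩ := isUnit_iff_exists_inv.mp h
    obtain ⟨b, rfl⟩ := Ideal.Quotient.mk_surjective y
    rw [← map_mul, ← map_one (Ideal.Quotient.mk _), Ideal.Quotient.mk_eq_mk_iff_sub_mem,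
      Ideal.mem_span_singleton] at hy
    obtain ⟨d, hd⟩ := hy
    have h1 : p ∣ 1 := by
      have : (1 : A) = a * b - p ^ e * d := by linear_combination -hd
      rw [this]
      exact dvd_sub (hdvd.mul_right b) ((dvd_pow_self p (by omega)).mul_right d)
    exact hp.not_unit (isUnit_of_dvd_one h1)
  · intro hdvd
    have hco : IsCoprime (p ^ e) a := ((hp.coprime_iff_not_dvd.mpr hdvd).pow_left)
    obtain ⟨u, v, huv⟩ := hco
    refine isUnit_iff_exists_inv.mpr ⟨mkp v, ?_⟩
    rw [← map_mul, ← map_one (Ideal.Quotient.mk _), Ideal.Quotient.mk_eq_mk_iff_sub_mem,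
      Ideal.mem_span_singleton]
    exact ⟨-u, by linear_combination huv⟩

lemma isUnit_iff_notmem (x : Rpe) :
    IsUnit x ↔ x ∉ Ideal.span ({mkp p} : Set Rpe) := by
  obtain ⟨a, rfl⟩ := Ideal.Quotient.mk_surjective x
  rw [isUnit_mk_iff hp he, mem_J_iff hp he]

lemma span_range_eq_top_iff {r : ℕ} (v : Fin r → Rpe) :
    Ideal.span (Set.range v) = ⊤ ↔ ¬ ∀ j, v j ∈ Ideal.span ({mkp p} : Set Rpe) := by
  constructor
  · intro htop hall
    have hle : Ideal.span (Set.range v) ≤ Ideal.span ({mkp p} : Set Rpe) := by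
      rw [Ideal.span_le]
      rintro _ ⟨j, rfl⟩
      exact hall j
    rw [htop, top_le_iff] at hle
    have : (1 : Rpe) ∈ Ideal.span ({mkp p} : Set Rpe) := hle ▸ trivial
    rw [← map_one (Ideal.Quotient.mk _), mem_J_iff hp he] at this
    exact hp.not_unit (isUnit_of_dvd_one this)
  · intro h
    push_neg at h
    obtain ⟨j, hj⟩ := h
    exact Ideal.eq_top_of_isUnit_mem _ (Ideal.subset_span ⟨j, rfl⟩)
      ((isUnit_iff_notmem hp he (v j)).mpr hj)

/-- The ideal `(p)` in `A ⧸ (p^e)` is in bijection with `A ⧸ (p^(e-1))`. -/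
noncomputable def spanEquiv :
    (A ⧸ Ideal.span ({p ^ (e - 1)} : Set A)) ≃
      {x : Rpe // x ∈ Ideal.span ({mkp p} : Set Rpe)} := by
  have hφle : Ideal.span ({p ^ (e - 1)} : Set A) ≤
      Submodule.comap (LinearMap.mulLeft A p) (Ideal.span ({p ^ e} : Set A)) := by
    intro x hx
    rw [Ideal.mem_span_singleton] at hx
    simp only [Submodule.mem_comap, LinearMap.mulLeft_apply]
    rw [Ideal.mem_span_singleton]
    calc p ^ e = p * p ^ (e - 1) := by rw [← pow_succ']; congr 1; omega
    _ ∣ p * x := mul_dvd_mul_left p hx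
  set φ : (A ⧸ Ideal.span ({p ^ (e - 1)} : Set A)) →ₗ[A] Rpe :=
    Submodule.mapQ _ _ (LinearMap.mulLeft A p) hφle with hφ
  have hmem : ∀ y, φ y ∈ Ideal.span ({mkp p} : Set Rpe) := by
    intro y
    obtain ⟨a, rfl⟩ := Ideal.Quotient.mk_surjective y
    have : φ (Ideal.Quotient.mk _ a) = mkp (p * a) := rfl
    rw [this, Ideal.mem_span_singleton']
    exact ⟨mkp a, by rw [← map_mul, mul_comm]⟩
  refine Equiv.ofBijective (fun y => ⟨φ y, hmem y⟩) ⟨?_, ?_⟩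
  · intro y y' hyy'
    obtain ⟨a, rfl⟩ := Ideal.Quotient.mk_surjective y
    obtain ⟨b, rfl⟩ := Ideal.Quotient.mk_surjective y'
    have h : mkp (p * a) = mkp (p * b) := Subtype.ext_iff.mp hyy'
    rw [Ideal.Quotient.mk_eq_mk_iff_sub_mem, Ideal.mem_span_singleton] at h
    rw [Ideal.Quotient.mk_eq_mk_iff_sub_mem, Ideal.mem_span_singleton]
    have h2 : p ^ e = p * p ^ (e - 1) := by rw [← pow_succ']; congr 1; omega
    rw [h2] at h
    rw [show p * a - p * b = p * (a - b) by ring] at h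
    exact (mul_dvd_mul_iff_left hp.ne_zero).mp h
  · rintro ⟨x, hx⟩
    rw [Ideal.mem_span_singleton'] at hx
    obtain ⟨c, hc⟩ := hx
    obtain ⟨b, rfl⟩ := Ideal.Quotient.mk_surjective c
    refine ⟨Ideal.Quotient.mk _ b, ?_⟩
    apply Subtype.ext
    simp only
    rw [← hc, ← map_mul, mul_comm]
    rfl

end Local

section Card
variable {Fq : Type*} [Field Fq] [Fintype Fq]

lemma finite_quot {f : Polynomial Fq} (hf : f ≠ 0) :
    Finite (Polynomial Fq ⧸ Ideal.span ({f} : Set (Polynomial Fq))) := by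
  let pb := AdjoinRoot.powerBasis hf
  exact Finite.of_equiv _ pb.basis.equivFun.toEquiv.symm

lemma card_quot {f : Polynomial Fq} (hf : f ≠ 0) :
    Nat.card (Polynomial Fq ⧸ Ideal.span ({f} : Set (Polynomial Fq)))
      = Fintype.card Fq ^ f.natDegree := by
  let pb := AdjoinRoot.powerBasis hf
  have h1 : Nat.card (AdjoinRoot f) = Nat.card (Fin pb.dim → Fq) :=
    Nat.card_congr pb.basis.equivFun.toEquiv
  have h2 : pb.dim = f.natDegree := rfl
  rw [show (Polynomial Fq ⧸ Ideal.span ({f} : Set (Polynomial Fq))) = AdjoinRoot f from rfl]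
  rw [h1, Nat.card_eq_fintype_card, Fintype.card_fun, h2, Fintype.card_fin]
end Card
section Count
variable {Fq : Type*} [Field Fq] [Fintype Fq]
variable {p : Polynomial Fq} (hp : Prime p) {e : ℕ} (he : 1 ≤ e)

local notation "Rpe" => Polynomial Fq ⧸ Ideal.span ({p ^ e} : Set (Polynomial Fq))
local notation "Jp" => Ideal.span ({Ideal.Quotient.mk (Ideal.span ({p ^ e} : Set (Polynomial Fq))) p} : Set (Polynomial Fq ⧸ Ideal.span ({p ^ e} : Set (Polynomial Fq))))

include hp he

lemma card_J_local :
    Nat.card {x : Rpe // x ∈ Jp} = Fintype.card Fq ^ ((e - 1) * p.natDegree) := by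
  rw [← Nat.card_congr (spanEquiv hp he), card_quot (pow_ne_zero _ hp.ne_zero),
    Polynomial.natDegree_pow]

lemma card_total_local :
    Nat.card Rpe = Fintype.card Fq ^ (e * p.natDegree) := by
  rw [card_quot (pow_ne_zero _ hp.ne_zero), Polynomial.natDegree_pow]

lemma card_units_local :
    Nat.card {x : Rpe // IsUnit x}
      = Fintype.card Fq ^ (e * p.natDegree) - Fintype.card Fq ^ ((e - 1) * p.natDegree) := by
  classical
  haveI := finite_quot (pow_ne_zero e hp.ne_zero)
  letI : Fintype Rpe := Fintype.ofFinite _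
  have h1 : Nat.card {x : Rpe // IsUnit x} = Nat.card {x : Rpe // ¬ x ∈ Jp} :=
    Nat.card_congr (Equiv.subtypeEquivRight fun x => isUnit_iff_notmem hp he x)
  rw [h1, Nat.card_eq_fintype_card, Fintype.card_subtype_compl,
    ← Nat.card_eq_fintype_card, ← Nat.card_eq_fintype_card,
    card_total_local hp he, card_J_local hp he]

lemma card_tuples_local (r : ℕ) :
    Nat.card {v : Fin r → Rpe // Ideal.span (Set.range v) = ⊤}
      = Fintype.card Fq ^ (e * p.natDegree * r)
        - Fintype.card Fq ^ ((e - 1) * p.natDegree * r) := by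
  classical
  haveI := finite_quot (pow_ne_zero e hp.ne_zero)
  letI : Fintype Rpe := Fintype.ofFinite _
  have h1 : Nat.card {v : Fin r → Rpe // Ideal.span (Set.range v) = ⊤}
      = Nat.card {v : Fin r → Rpe // ¬ ∀ j, v j ∈ Jp} :=
    Nat.card_congr (Equiv.subtypeEquivRight fun v => by
      rw [span_range_eq_top_iff hp he])
  have h2 : Nat.card {v : Fin r → Rpe // ∀ j, v j ∈ Jp}
      = Fintype.card Fq ^ ((e - 1) * p.natDegree * r) := by
    rw [Nat.card_congr (Equiv.subtypePiEquivPi (p := fun _ x => x ∈ Jp)), Nat.card_pi]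
    simp only [card_J_local hp he, Finset.prod_const, Finset.card_univ, Fintype.card_fin,
      ← pow_mul]
  have h3 : Nat.card (Fin r → Rpe) = Fintype.card Fq ^ (e * p.natDegree * r) := by
    rw [Nat.card_pi]
    simp only [card_total_local hp he, Finset.prod_const, Finset.card_univ, Fintype.card_fin,
      ← pow_mul]
  rw [h1, Nat.card_eq_fintype_card, Fintype.card_subtype_compl,
    ← Nat.card_eq_fintype_card, ← Nat.card_eq_fintype_card, h3, h2]

end Count

section Glue

lemma pi_isUnit_iff {ι : Type*} {R : ι → Type*} [∀ i, CommMonoid (R i)] (x : ∀ i, R i) :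
    IsUnit x ↔ ∀ i, IsUnit (x i) := by
  constructor
  · intro h i
    exact h.map (Pi.evalMonoidHom R i)
  · intro h
    refine isUnit_iff_exists_inv.mpr ⟨fun i => ((h i).unit⁻¹ : _), ?_⟩
    funext i
    exact (h i).mul_val_inv

lemma map_span_top_iff {R R' : Type*} [CommRing R] [CommRing R'] (f : R ≃+* R') (S : Set R) :
    Ideal.span (⇑f '' S) = ⊤ ↔ Ideal.span S = ⊤ := by
  rw [show ⇑f = ⇑(f : R →+* R') from rfl, ← Ideal.map_span]
  constructor
  · intro h
    have := congrArg (Ideal.comap (f : R →+* R')) h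
    rwa [Ideal.comap_map_of_bijective (f : R →+* R') f.bijective, Ideal.comap_top] at this
  · intro h
    rw [h, Ideal.eq_top_iff_one]
    have : (f : R →+* R') 1 ∈ Ideal.map (f : R →+* R') ⊤ :=
      Ideal.mem_map_of_mem (f : R →+* R') Submodule.mem_top
    simpa using this

lemma one_mem_span_range_iff {S : Type*} [CommRing S] {r : ℕ} (w : Fin r → S) :
    (1 : S) ∈ Ideal.span (Set.range w) ↔ ∃ c : Fin r → S, ∑ j, c j * w j = 1 := by
  rw [show Ideal.span (Set.range w) = Submodule.span S (Set.range w) from rfl,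
    Submodule.mem_span_range_iff_exists_fun]
  simp [smul_eq_mul]

lemma span_range_pi_top_iff {ι : Type*} [Fintype ι] {R : ι → Type*} [∀ i, CommRing (R i)]
    {r : ℕ} (v : Fin r → ∀ i, R i) :
    Ideal.span (Set.range v) = ⊤ ↔ ∀ i, Ideal.span (Set.range fun j => v j i) = ⊤ := by
  simp only [Ideal.eq_top_iff_one, one_mem_span_range_iff]
  constructor
  · rintro ⟨c, hc⟩ i
    refine ⟨fun j => c j i, ?_⟩
    have := congrFun hc i
    simpa using this
  · intro h
    choose c hc using h
    refine ⟨fun j i => c i j, ?_⟩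
    funext i
    simpa using hc i

end Glue

lemma ratio_eq (Q : ℚ) (hQ : 1 < Q) {e r : ℕ} (he : 1 ≤ e) (hr : 1 ≤ r) :
    (Q ^ (e * r) - Q ^ ((e - 1) * r)) / (Q ^ e - Q ^ (e - 1))
      = Q ^ (e * (r - 1)) * ((Q ^ r - 1) / (Q ^ r - Q ^ (r - 1))) := by
  have hQ0 : 0 < Q := lt_trans one_pos hQ
  obtain ⟨e', rfl⟩ := Nat.exists_eq_add_of_le he
  obtain ⟨r', rfl⟩ := Nat.exists_eq_add_of_le hr
  simp only [Nat.add_sub_cancel_left, add_tsub_cancel_left]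
  have h1 : (1 + e') * (1 + r') = e' * r' + e' + r' + 1 := by ring
  have h2 : e' * (1 + r') = e' * r' + e' := by ring
  have h3 : (1 + e') * r' = e' * r' + r' := by ring
  rw [h1, h2, h3]
  have hd1 : Q ^ (1 + e') - Q ^ e' ≠ 0 := by
    have : Q ^ e' < Q ^ (1 + e') := by
      rw [pow_add, pow_one]
      nlinarith [pow_pos hQ0 e']
    linarith
  have hd2 : Q ^ (1 + r') - Q ^ r' ≠ 0 := by
    have : Q ^ r' < Q ^ (1 + r') := by
      rw [pow_add, pow_one]
      nlinarith [pow_pos hQ0 r']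
    linarith
  field_simp
  ring

/- The number of sublattices of a free `F_q[T]`-module of rank `r` with cyclic quotient
isomorphic to `F_q[T]/(n)` equals `|n|^(r-1) * ∏_{p | n} (|p|^r - 1)/(|p|^r - |p|^(r-1))`,
the product being over the monic irreducible (i.e. normalized prime) divisors of `n`. -/
set_option synthInstance.maxHeartbeats 1000000 in
set_option maxHeartbeats 2000000 in
open scoped Classical in
theorem count_cyclic_sublattices
    (Fq : Type*) [Field Fq] [Fintype Fq] (q : ℕ) (hq : Fintype.card Fq = q)
    (r : ℕ) (hr : 1 ≤ r)
    (M : Type*) [AddCommGroup M] [Module (Polynomial Fq) M]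
    [Module.Free (Polynomial Fq) M] [Module.Finite (Polynomial Fq) M]
    (hrank : Module.finrank (Polynomial Fq) M = r)
    (n : Polynomial Fq) (hn : n.Monic) :
    (Nat.card {N : Submodule (Polynomial Fq) M //
        Nonempty ((M ⧸ N) ≃ₗ[Polynomial Fq] (Polynomial Fq ⧸ Ideal.span {n}))} : ℚ)
      = ((q : ℚ) ^ n.natDegree) ^ (r - 1) *
        ∏ p ∈ (normalizedFactors n).toFinset,
          ((((q : ℚ) ^ p.natDegree) ^ r - 1) /
            (((q : ℚ) ^ p.natDegree) ^ r - ((q : ℚ) ^ p.natDegree) ^ (r - 1))) := by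
  subst hq
  set c := Fintype.card Fq with hc
  have hq2 : 1 < c := Fintype.one_lt_card
  have hn0 : n ≠ 0 := hn.ne_zero
  set s := (normalizedFactors n).toFinset with hs
  set I : Ideal (Polynomial Fq) := Ideal.span {n} with hI
  set cnt : Polynomial Fq → ℕ := fun p => (normalizedFactors n).count p with hcnt
  have hprime : ∀ p ∈ s, Prime p := fun p hp =>
    prime_of_normalized_factor p (Multiset.mem_toFinset.mp hp)
  have hdpos : ∀ p ∈ s, 1 ≤ p.natDegree := fun p hp => (hprime p hp).irreducible.natDegree_pos
  have hepos : ∀ p ∈ s, 1 ≤ cnt p := fun p hp =>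
    Multiset.count_pos.mpr (Multiset.mem_toFinset.mp hp)
  -- the product of the normalized factors is n
  have hfacprod : (normalizedFactors n).prod = n := by
    have hassoc := UniqueFactorizationMonoid.prod_normalizedFactors hn0
    have hmonic : ((normalizedFactors n).prod).Monic := by
      have := Polynomial.monic_multiset_prod_of_monic (normalizedFactors n) id
        (fun p hp => by
          have h1 : normalize p = p := normalize_normalized_factor p hp
          have h2 : p ≠ 0 := (prime_of_normalized_factor p hp).ne_zero
          simpa [h1] using Polynomial.monic_normalize h2)
      simpa using this
    exact Polynomial.eq_of_monic_of_associated hmonic hn hassoc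
  have hdeg : n.natDegree = ∑ p ∈ s, cnt p * p.natDegree := by
    conv_lhs => rw [← hfacprod]
    rw [Polynomial.natDegree_multiset_prod _
      (fun h => (hprime 0 (Multiset.mem_toFinset.mpr h)).ne_zero rfl)]
    rw [Finset.sum_multiset_map_count]
    simp [smul_eq_mul, hcnt]
    simp [hs]
  -- CRT
  have hprodI : (∏ p ∈ s, Ideal.span ({p} : Set (Polynomial Fq)) ^ cnt p) = I := by
    rw [Finset.prod_congr rfl fun p _ => Ideal.span_singleton_pow p (cnt p),
      Ideal.prod_span_singleton]
    rw [hI]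
    congr 1
    rw [← hfacprod, ← Finset.prod_multiset_count]
  let crt2 : (Polynomial Fq ⧸ I) ≃+*
      ∀ P : s, (Polynomial Fq ⧸ Ideal.span ({(P : Polynomial Fq) ^ cnt (P : Polynomial Fq)} :
        Set (Polynomial Fq))) :=
    (IsDedekindDomain.quotientEquivPiOfFinsetProdEq I (fun p => Ideal.span {p}) cnt
      (fun p hp => (Ideal.prime_iff_isPrime
          (by simpa [Ideal.span_singleton_eq_bot] using (hprime p hp).ne_zero)).mpr
        ((Ideal.span_singleton_prime (hprime p hp).ne_zero).mpr (hprime p hp)))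
      (fun p hp p' hp' hne hspan => hne (by
        have hassoc := Ideal.span_singleton_eq_span_singleton.mp hspan
        rw [← normalize_normalized_factor p (Multiset.mem_toFinset.mp hp),
          ← normalize_normalized_factor p' (Multiset.mem_toFinset.mp hp')]
        exact normalize_eq_normalize hassoc.dvd hassoc.symm.dvd))
      hprodI).trans
      (RingEquiv.piCongrRight fun P => Ideal.quotEquivOfEq (Ideal.span_singleton_pow _ _))
  -- basis of M
  let b : Module.Basis (Fin r) (Polynomial Fq) M :=
    (Module.Free.chooseBasis (Polynomial Fq) M).reindex (Fintype.equivFinOfCardEq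
      (by rw [← Module.finrank_eq_card_chooseBasisIndex, hrank]))
  have hmksurj : Function.Surjective (algebraMap (Polynomial Fq) (Polynomial Fq ⧸ I)) := by
    rw [Ideal.Quotient.algebraMap_eq]
    exact Ideal.Quotient.mk_surjective
  have hspan_iff : ∀ v : Fin r → (Polynomial Fq ⧸ I),
      (Submodule.span (Polynomial Fq) (Set.range v) = ⊤ ↔ Ideal.span (Set.range v) = ⊤) := by
    intro v
    rw [← Submodule.restrictScalars_eq_top_iff (S := Polynomial Fq)
        (p := Ideal.span (Set.range v)),
      show Ideal.span (Set.range v) = Submodule.span (Polynomial Fq ⧸ I) (Set.range v) from rfl,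
      Submodule.restrictScalars_span (Polynomial Fq) _ hmksurj]
  -- tuples equivalences
  let E2 : {v : Fin r → (Polynomial Fq ⧸ I) // Ideal.span (Set.range v) = ⊤} ≃
      {φ : M →ₗ[Polynomial Fq] (Polynomial Fq ⧸ I) // Function.Surjective φ} :=
    Equiv.subtypeEquiv (b.constr (Polynomial Fq)).toEquiv (fun v => by
      rw [show (b.constr (Polynomial Fq)).toEquiv v = b.constr (Polynomial Fq) v from rfl]
      rw [← LinearMap.range_eq_top, Module.Basis.constr_range]
      exact (hspan_iff v).symm)
  let E3 : {v : Fin r → (Polynomial Fq ⧸ I) // Ideal.span (Set.range v) = ⊤} ≃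
      {w : Fin r → (∀ P : s, (Polynomial Fq ⧸ Ideal.span
          ({(P : Polynomial Fq) ^ cnt (P : Polynomial Fq)} : Set (Polynomial Fq)))) //
        Ideal.span (Set.range w) = ⊤} :=
    Equiv.subtypeEquiv (Equiv.piCongrRight fun _ => crt2.toEquiv) (fun v => by
      rw [show ((Equiv.piCongrRight fun _ => crt2.toEquiv) v) = ⇑crt2 ∘ v from rfl,
        Set.range_comp, map_span_top_iff])
  let E4 : {w : Fin r → (∀ P : s, (Polynomial Fq ⧸ Ideal.span
          ({(P : Polynomial Fq) ^ cnt (P : Polynomial Fq)} : Set (Polynomial Fq)))) //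
        Ideal.span (Set.range w) = ⊤} ≃
      ∀ P : s, {w : Fin r → (Polynomial Fq ⧸ Ideal.span
          ({(P : Polynomial Fq) ^ cnt (P : Polynomial Fq)} : Set (Polynomial Fq))) //
        Ideal.span (Set.range w) = ⊤} :=
    (Equiv.subtypeEquiv (Equiv.piComm _) (fun w => by
      rw [span_range_pi_top_iff]
      rfl)).trans (Equiv.subtypePiEquivPi)
  -- units equivalences
  let EU : ((Polynomial Fq ⧸ I) ≃ₗ[Polynomial Fq] (Polynomial Fq ⧸ I)) ≃
      ∀ P : s, {x : (Polynomial Fq ⧸ Ideal.span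
          ({(P : Polynomial Fq) ^ cnt (P : Polynomial Fq)} : Set (Polynomial Fq))) // IsUnit x} :=
    ((autEquivUnits I).trans
      ((Equiv.subtypeEquiv crt2.toEquiv (fun x => by
        constructor
        · intro h; exact h.map crt2
        · intro h
          have := h.map crt2.symm
          simpa using this)).trans
      ((Equiv.subtypeEquivRight (fun x => pi_isUnit_iff x)).trans Equiv.subtypePiEquivPi)))
  -- cardinalities
  have hT : Nat.card {φ : M →ₗ[Polynomial Fq] (Polynomial Fq ⧸ I) // Function.Surjective φ}
      = ∏ p ∈ s, (c ^ (cnt p * p.natDegree * r) - c ^ ((cnt p - 1) * p.natDegree * r)) := by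
    rw [← Nat.card_congr E2, Nat.card_congr E3, Nat.card_congr E4, Nat.card_pi]
    rw [← Finset.prod_coe_sort s
      (fun p => (c ^ (cnt p * p.natDegree * r) - c ^ ((cnt p - 1) * p.natDegree * r)))]
    exact Finset.prod_congr rfl fun P _ =>
      card_tuples_local (hprime _ P.2) (hepos _ P.2) r
  have hU : Nat.card ((Polynomial Fq ⧸ I) ≃ₗ[Polynomial Fq] (Polynomial Fq ⧸ I))
      = ∏ p ∈ s, (c ^ (cnt p * p.natDegree) - c ^ ((cnt p - 1) * p.natDegree)) := by
    rw [Nat.card_congr EU, Nat.card_pi]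
    rw [← Finset.prod_coe_sort s
      (fun p => (c ^ (cnt p * p.natDegree) - c ^ ((cnt p - 1) * p.natDegree)))]
    exact Finset.prod_congr rfl fun P _ => card_units_local (hprime _ P.2) (hepos _ P.2)
  have key : Nat.card {N : Submodule (Polynomial Fq) M //
        Nonempty ((M ⧸ N) ≃ₗ[Polynomial Fq] (Polynomial Fq ⧸ I))} *
      (∏ p ∈ s, (c ^ (cnt p * p.natDegree) - c ^ ((cnt p - 1) * p.natDegree)))
      = ∏ p ∈ s, (c ^ (cnt p * p.natDegree * r) - c ^ ((cnt p - 1) * p.natDegree * r)) := by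
    rw [← hU, ← hT, ← Nat.card_prod]
    exact Nat.card_congr surjEquiv
  -- positivity facts
  have hfacle : ∀ p ∈ s, ∀ m : ℕ, c ^ ((cnt p - 1) * p.natDegree * m)
      ≤ c ^ (cnt p * p.natDegree * m) := by
    intro p hp m
    refine Nat.pow_le_pow_right (le_of_lt hq2) ?_
    exact Nat.mul_le_mul (Nat.mul_le_mul (Nat.sub_le _ _) le_rfl) le_rfl
  -- cast products to ℚ
  have hUcast : ((∏ p ∈ s, (c ^ (cnt p * p.natDegree) - c ^ ((cnt p - 1) * p.natDegree)) : ℕ) : ℚ)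
      = ∏ p ∈ s, ((c:ℚ) ^ (cnt p * p.natDegree) - (c:ℚ) ^ ((cnt p - 1) * p.natDegree)) := by
    rw [Nat.cast_prod]
    refine Finset.prod_congr rfl fun p hp => ?_
    rw [Nat.cast_sub (by simpa using hfacle p hp 1)]
    push_cast
    ring
  have hTcast : ((∏ p ∈ s,
        (c ^ (cnt p * p.natDegree * r) - c ^ ((cnt p - 1) * p.natDegree * r)) : ℕ) : ℚ)
      = ∏ p ∈ s, ((c:ℚ) ^ (cnt p * p.natDegree * r) - (c:ℚ) ^ ((cnt p - 1) * p.natDegree * r)) := by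
    rw [Nat.cast_prod]
    refine Finset.prod_congr rfl fun p hp => ?_
    rw [Nat.cast_sub (hfacle p hp r)]
    push_cast
    ring
  have hkeyQ : (Nat.card {N : Submodule (Polynomial Fq) M //
        Nonempty ((M ⧸ N) ≃ₗ[Polynomial Fq] (Polynomial Fq ⧸ I))} : ℚ) *
      (∏ p ∈ s, ((c:ℚ) ^ (cnt p * p.natDegree) - (c:ℚ) ^ ((cnt p - 1) * p.natDegree)))
      = ∏ p ∈ s, ((c:ℚ) ^ (cnt p * p.natDegree * r) - (c:ℚ) ^ ((cnt p - 1) * p.natDegree * r)) := by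
    have h0 := congrArg (Nat.cast (R := ℚ)) key
    rw [Nat.cast_mul, hUcast, hTcast] at h0
    exact h0
  have hcQ : (1:ℚ) < (c:ℚ) := by exact_mod_cast hq2
  have hfactor_ne : ∀ p ∈ s,
      ((c:ℚ) ^ (cnt p * p.natDegree) - (c:ℚ) ^ ((cnt p - 1) * p.natDegree)) ≠ 0 := by
    intro p hp
    have hlt : (cnt p - 1) * p.natDegree < cnt p * p.natDegree :=
      (Nat.mul_lt_mul_right (hdpos p hp)).mpr (Nat.sub_lt (hepos p hp) one_pos)
    have := pow_lt_pow_right₀ hcQ hlt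
    linarith
  have hUne : (∏ p ∈ s, ((c:ℚ) ^ (cnt p * p.natDegree) - (c:ℚ) ^ ((cnt p - 1) * p.natDegree)))
      ≠ 0 := Finset.prod_ne_zero_iff.mpr hfactor_ne
  rw [(eq_div_iff hUne).mpr hkeyQ, ← Finset.prod_div_distrib]
  -- rewrite the right hand side as a single product
  rw [hdeg, ← pow_mul, Finset.sum_mul]
  conv_rhs => rw [← Finset.prod_pow_eq_pow_sum, ← Finset.prod_mul_distrib]
  refine Finset.prod_congr rfl fun p hp => ?_
  have hQ1 : (1:ℚ) < (c:ℚ) ^ p.natDegree :=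
    one_lt_pow₀ hcQ (Nat.one_le_iff_ne_zero.mp (hdpos p hp))
  have h1 : ((c:ℚ) ^ p.natDegree) ^ (cnt p * r) = (c:ℚ) ^ (cnt p * p.natDegree * r) := by
    rw [← pow_mul]; congr 1; ring
  have h2 : ((c:ℚ) ^ p.natDegree) ^ ((cnt p - 1) * r)
      = (c:ℚ) ^ ((cnt p - 1) * p.natDegree * r) := by
    rw [← pow_mul]; congr 1; ring
  have h3 : ((c:ℚ) ^ p.natDegree) ^ (cnt p) = (c:ℚ) ^ (cnt p * p.natDegree) := by
    rw [← pow_mul]; congr 1; ring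
  have h4 : ((c:ℚ) ^ p.natDegree) ^ (cnt p - 1) = (c:ℚ) ^ ((cnt p - 1) * p.natDegree) := by
    rw [← pow_mul]; congr 1; ring
  have h5 : ((c:ℚ) ^ p.natDegree) ^ (cnt p * (r - 1))
      = (c:ℚ) ^ (cnt p * p.natDegree * (r - 1)) := by
    rw [← pow_mul]; congr 1; ring
  rw [← h1, ← h2, ← h3, ← h4, ← h5]
  exact ratio_eq ((c:ℚ) ^ p.natDegree) hQ1 (hepos p hp) hr
end

section
/- Let q be a prime power, F_q the finite field with q elements, and A = F_q[T]. Let Λ' be a free A-module of rank r−1, let Λ = Λ' ⊕ A·z be a free A-module of rank r (with z a basis element of the complementary rank-one summand), let n ∈ A be monic nonzero, and let Λ̃ ⊆ Λ be an A-submodule with Λ/Λ̃ isomorphic to A/nA. Then there exist monic polynomials n₁, n₂ ∈ A with n = n₁·n₂ and an element λ ∈ Λ' such that: (i) Λ'/(Λ̃ ∩ Λ') is isomorphic to A/n₂A, and (ii) Λ̃ = (Λ̃ ∩ Λ') ⊕ A·(n₁ z + λ). -/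
open Polynomial

lemma span_eq_of_quot_equiv {R : Type*} [CommRing R] (a b : R)
    (e : (R ⧸ Ideal.span {a}) ≃ₗ[R] (R ⧸ Ideal.span {b})) :
    Ideal.span ({a} : Set R) = Ideal.span {b} := by
  have key : ∀ (c : R) (x : R ⧸ Ideal.span {c}), c • x = 0 := by
    intro c x
    obtain ⟨t, rfl⟩ := Submodule.Quotient.mk_surjective _ x
    rw [← Submodule.Quotient.mk_smul, Submodule.Quotient.mk_eq_zero]
    exact Ideal.mem_span_singleton.mpr (Dvd.intro t rfl)
  apply le_antisymm
  · rw [Ideal.span_singleton_le_iff_mem]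
    have h : a • ((e.symm (Submodule.Quotient.mk 1)) : R ⧸ Ideal.span {a}) = 0 := key a _
    have h2 : (Submodule.Quotient.mk (a • (1:R)) : R ⧸ Ideal.span {b}) = 0 := by
      have := congrArg e h
      rw [map_smul, LinearEquiv.apply_symm_apply, map_zero] at this
      rw [← Submodule.Quotient.mk_smul] at this
      exact this
    rw [Submodule.Quotient.mk_eq_zero] at h2
    simpa using h2
  · rw [Ideal.span_singleton_le_iff_mem]
    have h : b • ((e (Submodule.Quotient.mk 1)) : R ⧸ Ideal.span {b}) = 0 := key b _
    have h2 : (Submodule.Quotient.mk (b • (1:R)) : R ⧸ Ideal.span {a}) = 0 := by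
      have := congrArg e.symm h
      rw [map_smul, LinearEquiv.symm_apply_apply, map_zero] at this
      rw [← Submodule.Quotient.mk_smul] at this
      exact this
    rw [Submodule.Quotient.mk_eq_zero] at h2
    simpa using h2

set_option maxHeartbeats 1000000 in
theorem sublattice_decomposition
    (Fq : Type*) [Field Fq] [Fintype Fq]
    (r : ℕ) (hr : 1 ≤ r)
    (M : Type*) [AddCommGroup M] [Module (Polynomial Fq) M]
    [Module.Free (Polynomial Fq) M] [Module.Finite (Polynomial Fq) M]
    (hrankM : Module.finrank (Polynomial Fq) M = r)
    (L' : Submodule (Polynomial Fq) M)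
    (hrankL' : Module.finrank (Polynomial Fq) L' = r - 1)
    (z : M)
    (hcompl : IsCompl L' (Submodule.span (Polynomial Fq) {z}))
    (n : Polynomial Fq) (hn : n.Monic)
    (N : Submodule (Polynomial Fq) M)
    (hN : Nonempty ((M ⧸ N) ≃ₗ[Polynomial Fq] (Polynomial Fq ⧸ Ideal.span {n}))) :
    ∃ n₁ n₂ : Polynomial Fq, n₁.Monic ∧ n₂.Monic ∧ n = n₁ * n₂ ∧
      ∃ l ∈ L',
        Nonempty ((↥L' ⧸ N.comap L'.subtype) ≃ₗ[Polynomial Fq]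
            (Polynomial Fq ⧸ Ideal.span {n₂})) ∧
        N = (N ⊓ L') ⊔ Submodule.span (Polynomial Fq) {n₁ • z + l} ∧
        (N ⊓ L') ⊓ Submodule.span (Polynomial Fq) {n₁ • z + l} = ⊥ := by
  classical
  obtain ⟨e⟩ := hN
  have hn0 : n ≠ 0 := hn.ne_zero
  have hz : z ≠ 0 := by
    intro h
    rw [h, Submodule.span_zero_singleton] at hcompl
    have hL : L' = ⊤ := by simpa using hcompl.sup_eq_top
    rw [hL, finrank_top, hrankM] at hrankL'
    omega
  -- n kills M ⧸ N
  have hsmul : ∀ m : M, n • m ∈ N := by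
    intro m
    have h1 : n • (e (Submodule.Quotient.mk m)) = 0 := by
      obtain ⟨t, ht⟩ := Submodule.Quotient.mk_surjective _ (e (Submodule.Quotient.mk m))
      rw [← ht, ← Submodule.Quotient.mk_smul, Submodule.Quotient.mk_eq_zero]
      exact Ideal.mem_span_singleton.mpr (Dvd.intro t rfl)
    have h2 : n • (Submodule.Quotient.mk m : M ⧸ N) = 0 := by
      apply e.injective; rw [map_smul, h1, map_zero]
    rwa [← Submodule.Quotient.mk_smul, Submodule.Quotient.mk_eq_zero] at h2
  -- the ideal I of coefficients a with a • z ∈ N ⊔ L'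
  set I : Ideal (Polynomial Fq) :=
    Submodule.comap (LinearMap.toSpanSingleton (Polynomial Fq) M z) (N ⊔ L') with hIdef
  have hnI : n ∈ I := by
    simp only [hIdef, Submodule.mem_comap, LinearMap.toSpanSingleton_apply]
    exact Submodule.mem_sup_left (hsmul z)
  obtain ⟨g, hgI⟩ := (IsPrincipalIdealRing.principal I).principal
  have hgdvd : g ∣ n := by
    have hnI' := hnI
    rw [hgI] at hnI'
    exact Ideal.mem_span_singleton.mp hnI'
  have hg0 : g ≠ 0 := by
    rintro rfl
    exact hn0 (zero_dvd_iff.mp hgdvd)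
  set n₁ : Polynomial Fq := normalize g with hn₁def
  have hn₁ : n₁.Monic := Polynomial.monic_normalize hg0
  have hn₁0 : n₁ ≠ 0 := hn₁.ne_zero
  have hI1 : I = Ideal.span {n₁} := by
    rw [hgI]
    exact (Ideal.span_singleton_eq_span_singleton.mpr (associated_normalize g).symm).symm
  -- pick l with n₁ • z + l ∈ N
  have hmem : n₁ • z ∈ N ⊔ L' := by
    have : n₁ ∈ I := hI1 ▸ Ideal.mem_span_singleton.mpr dvd_rfl
    simpa only [hIdef, Submodule.mem_comap, LinearMap.toSpanSingleton_apply] using this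
  obtain ⟨y, hy, l₀, hl₀, hyl⟩ := Submodule.mem_sup.mp hmem
  refine ⟨n₁, ?_⟩
  set l : M := -l₀ with hldef
  have hl : l ∈ L' := neg_mem hl₀
  set w : M := n₁ • z + l with hwdef
  have hwN : w ∈ N := by
    have : w = y := by rw [hwdef, hldef, ← hyl]; abel
    rw [this]; exact hy
  -- part (ii): N = (N ⊓ L') ⊔ span {w}
  have hNdecomp : N = (N ⊓ L') ⊔ Submodule.span (Polynomial Fq) {w} := by
    apply le_antisymm
    · intro x hx
      have hxT : x ∈ L' ⊔ Submodule.span (Polynomial Fq) {z} := by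
        rw [hcompl.sup_eq_top]; trivial
      obtain ⟨y₁, hy₁, u, hu, hyux⟩ := Submodule.mem_sup.mp hxT
      obtain ⟨a, rfl⟩ := Submodule.mem_span_singleton.mp hu
      have haI : a ∈ I := by
        simp only [hIdef, Submodule.mem_comap, LinearMap.toSpanSingleton_apply]
        have : a • z = x - y₁ := by rw [← hyux]; abel
        rw [this]
        exact Submodule.sub_mem _ (Submodule.mem_sup_left hx) (Submodule.mem_sup_right hy₁)
      obtain ⟨b, hb⟩ := Ideal.mem_span_singleton.mp (hI1 ▸ haI)
      have hxw : x - b • w ∈ N ⊓ L' := by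
        constructor
        · exact Submodule.sub_mem _ hx (Submodule.smul_mem _ _ hwN)
        · have heq : x - b • w = y₁ - b • l := by
            rw [hwdef, ← hyux, hb, smul_add, smul_smul, mul_comm b n₁]
            abel
          rw [heq]
          exact Submodule.sub_mem _ hy₁ (Submodule.smul_mem _ _ hl)
      refine Submodule.mem_sup.mpr ⟨x - b • w, hxw, b • w,
        Submodule.smul_mem _ _ (Submodule.mem_span_singleton_self w), by abel⟩
    · exact sup_le (le_trans inf_le_left le_rfl)
        ((Submodule.span_singleton_le_iff_mem _ _).mpr hwN)
  -- part (iii): disjointness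
  have hbot : (N ⊓ L') ⊓ Submodule.span (Polynomial Fq) {w} = ⊥ := by
    rw [eq_bot_iff]
    intro x hx
    obtain ⟨hx1, hxw⟩ := Submodule.mem_inf.mp hx
    obtain ⟨hxN, hxL⟩ := Submodule.mem_inf.mp hx1
    obtain ⟨c, rfl⟩ := Submodule.mem_span_singleton.mp hxw
    have h1 : (c * n₁) • z ∈ L' ⊓ Submodule.span (Polynomial Fq) {z} := by
      constructor
      · have hcz : (c * n₁) • z = c • w - c • l := by
          rw [hwdef, smul_add, mul_smul]
          abel
        rw [hcz]
        exact Submodule.sub_mem _ hxL (Submodule.smul_mem _ _ hl)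
      · exact Submodule.mem_span_singleton.mpr ⟨c * n₁, rfl⟩
    rw [hcompl.inf_eq_bot] at h1
    have h0 : (c * n₁) • z = 0 := (Submodule.mem_bot _).mp h1
    have hc : c = 0 := by
      rcases smul_eq_zero.mp h0 with h | h
      · rcases mul_eq_zero.mp h with h' | h'
        · exact h'
        · exact absurd h' hn₁0
      · exact absurd h hz
    rw [hc, zero_smul]
    exact Submodule.zero_mem ⊥
  -- part (i): the quotient isomorphism
  let φ : ↥L' →ₗ[Polynomial Fq] (Polynomial Fq ⧸ Ideal.span {n}) :=
    e.toLinearMap ∘ₗ (N.mkQ ∘ₗ L'.subtype)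
  have hkerφ : LinearMap.ker φ = N.comap L'.subtype := by
    rw [show φ = e.toLinearMap ∘ₗ (N.mkQ ∘ₗ L'.subtype) from rfl,
      LinearMap.ker_comp, LinearEquiv.ker, Submodule.comap_bot, LinearMap.ker_comp,
      Submodule.ker_mkQ]
  set S := LinearMap.range φ with hSdef
  have eq1 : (↥L' ⧸ N.comap L'.subtype) ≃ₗ[Polynomial Fq] S :=
    (Submodule.quotEquivOfEq _ _ hkerφ.symm).trans φ.quotKerEquivRange
  set J : Ideal (Polynomial Fq) :=
    Submodule.comap (Ideal.span {n} : Ideal (Polynomial Fq)).mkQ S with hJdef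
  have hmapJ : Submodule.map (Ideal.span {n} : Ideal (Polynomial Fq)).mkQ J = S := by
    rw [hJdef, Submodule.map_comap_eq, Submodule.range_mkQ, top_inf_eq]
  have hnJle : (Ideal.span {n} : Ideal (Polynomial Fq)) ≤ J := by
    intro x hx
    rw [hJdef]
    simp only [Submodule.mem_comap, Submodule.mkQ_apply]
    have hx0 : (Submodule.Quotient.mk x : Polynomial Fq ⧸ Ideal.span {n}) = 0 :=
      (Submodule.Quotient.mk_eq_zero _).mpr hx
    rw [hx0]
    exact S.zero_mem
  obtain ⟨g₂, hg₂J⟩ := (IsPrincipalIdealRing.principal J).principal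
  have hnJ' : n ∈ J := hnJle (Ideal.mem_span_singleton.mpr dvd_rfl)
  have hg₂dvd : g₂ ∣ n := by
    have h := hnJ'
    rw [hg₂J] at h
    exact Ideal.mem_span_singleton.mp h
  have hg₂0 : g₂ ≠ 0 := fun h => hn0 (zero_dvd_iff.mp (h ▸ hg₂dvd))
  set d : Polynomial Fq := normalize g₂ with hddef
  have hd : d.Monic := Polynomial.monic_normalize hg₂0
  have hJd : J = Ideal.span {d} := by
    rw [hg₂J]
    exact (Ideal.span_singleton_eq_span_singleton.mpr (associated_normalize g₂).symm).symm
  have u₁ : ((Polynomial Fq ⧸ Ideal.span {n}) ⧸ S) ≃ₗ[Polynomial Fq] (Polynomial Fq ⧸ J) :=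
    (Submodule.quotEquivOfEq _ _ hmapJ.symm).trans
      (Submodule.quotientQuotientEquivQuotient _ _ hnJle)
  set S' := Submodule.map N.mkQ L' with hS'def
  have hmapS' : Submodule.map (e : (M ⧸ N) →ₗ[Polynomial Fq] _) S' = S := by
    rw [hS'def, hSdef, show φ = e.toLinearMap ∘ₗ (N.mkQ ∘ₗ L'.subtype) from rfl,
      LinearMap.range_comp, LinearMap.range_comp, Submodule.range_subtype]
  have u₂ : ((M ⧸ N) ⧸ S') ≃ₗ[Polynomial Fq] ((Polynomial Fq ⧸ Ideal.span {n}) ⧸ S) :=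
    Submodule.Quotient.equiv S' S e hmapS'
  have hmapL : Submodule.map N.mkQ (N ⊔ L') = S' := by
    rw [hS'def, Submodule.map_sup, Submodule.mkQ_map_self, bot_sup_eq]
  have u₃ : ((M ⧸ N) ⧸ S') ≃ₗ[Polynomial Fq] (M ⧸ (N ⊔ L')) :=
    (Submodule.quotEquivOfEq _ _ hmapL.symm).trans
      (Submodule.quotientQuotientEquivQuotient N (N ⊔ L') le_sup_left)
  let ψ : Polynomial Fq →ₗ[Polynomial Fq] (M ⧸ (N ⊔ L')) :=
    (N ⊔ L').mkQ ∘ₗ LinearMap.toSpanSingleton (Polynomial Fq) M z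
  have hkerψ : LinearMap.ker ψ = Ideal.span {n₁} := by
    rw [show ψ = (N ⊔ L').mkQ ∘ₗ LinearMap.toSpanSingleton (Polynomial Fq) M z from rfl,
      LinearMap.ker_comp, Submodule.ker_mkQ, ← hIdef]
    exact hI1
  have hψsurj : Function.Surjective ψ := by
    rw [← LinearMap.range_eq_top,
      show ψ = (N ⊔ L').mkQ ∘ₗ LinearMap.toSpanSingleton (Polynomial Fq) M z from rfl,
      LinearMap.range_comp, ← LinearMap.span_singleton_eq_range,
      Submodule.map_mkQ_eq_top, sup_assoc, hcompl.sup_eq_top, sup_top_eq]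
  have u₄ : (Polynomial Fq ⧸ Ideal.span {n₁}) ≃ₗ[Polynomial Fq] (M ⧸ (N ⊔ L')) :=
    (Submodule.quotEquivOfEq _ _ hkerψ.symm).trans (ψ.quotKerEquivOfSurjective hψsurj)
  have vd : (Polynomial Fq ⧸ Ideal.span {d}) ≃ₗ[Polynomial Fq]
      (Polynomial Fq ⧸ Ideal.span {n₁}) :=
    (((Submodule.quotEquivOfEq _ _ hJd.symm).trans u₁.symm).trans
      (u₂.symm.trans u₃)).trans u₄.symm
  have hdn₁ : d = n₁ :=
    Polynomial.eq_of_monic_of_associated hd hn₁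
      (Ideal.span_singleton_eq_span_singleton.mp (span_eq_of_quot_equiv d n₁ vd))
  have hn₁dvd : n₁ ∣ n := by
    have h := hnJ'
    rw [hJd, hdn₁] at h
    exact Ideal.mem_span_singleton.mp h
  obtain ⟨n₂, hnn⟩ := hn₁dvd
  have hn₂ : n₂.Monic := hn₁.of_mul_monic_left (hnn ▸ hn)
  -- the map a ↦ a • (mk n₁)
  let f : Polynomial Fq →ₗ[Polynomial Fq] (Polynomial Fq ⧸ Ideal.span {n}) :=
    LinearMap.toSpanSingleton _ _ ((Ideal.span {n} : Ideal (Polynomial Fq)).mkQ n₁)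
  have hrangef : LinearMap.range f = S := by
    rw [show f = LinearMap.toSpanSingleton _ _
        ((Ideal.span {n} : Ideal (Polynomial Fq)).mkQ n₁) from rfl,
      ← LinearMap.span_singleton_eq_range]
    have hms : (Submodule.span (Polynomial Fq)
          {(Ideal.span {n} : Ideal (Polynomial Fq)).mkQ n₁}) =
        Submodule.map (Ideal.span {n} : Ideal (Polynomial Fq)).mkQ
          (Submodule.span (Polynomial Fq) {n₁}) := by
      rw [Submodule.map_span, Set.image_singleton]
    rw [hms, Ideal.submodule_span_eq, ← hdn₁, ← hJd, hmapJ]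
  have hkerf : LinearMap.ker f = Ideal.span {n₂} := by
    ext a
    simp only [LinearMap.mem_ker, LinearMap.toSpanSingleton_apply, f]
    rw [← LinearMap.map_smul, Submodule.mkQ_apply, Submodule.Quotient.mk_eq_zero,
      smul_eq_mul]
    rw [show ((a * n₁ ∈ Ideal.span {n}) = (n ∣ a * n₁)) from
      propext Ideal.mem_span_singleton, Ideal.mem_span_singleton, hnn]
    constructor
    · intro h
      rw [mul_comm a n₁] at h
      exact (mul_dvd_mul_iff_left hn₁0).mp h
    · intro h
      rw [mul_comm a n₁]
      exact (mul_dvd_mul_iff_left hn₁0).mpr h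
  have eq2 : (Polynomial Fq ⧸ Ideal.span {n₂}) ≃ₗ[Polynomial Fq] S :=
    ((Submodule.quotEquivOfEq _ _ hkerf.symm).trans f.quotKerEquivRange).trans
      (LinearEquiv.ofEq _ _ hrangef)
  exact ⟨n₂, hn₁, hn₂, hnn, l, hl, ⟨eq1.trans eq2.symm⟩, hNdecomp, hbot⟩
end

section
/- Let p be a prime, q a power of p, F_q the field with q elements, and F a field extension of F_q (so F has characteristic p). Let V ⊆ F be a finite F_q-subspace of F, and let k ≥ 1 be an integer not divisible by q − 1. Then ∑_{0 ≠ v ∈ V} v^{−k} = 0. -/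
/- Power sums over a finite `F_q`-subspace: if `q - 1 ∤ k` then `∑_{0 ≠ v ∈ V} v^{-k} = 0`. -/
theorem eisenstein_sum_vanishes
    (Fq : Type*) [Field Fq] [Fintype Fq] (q : ℕ) (hq : Fintype.card Fq = q)
    (F : Type*) [Field F] [Algebra Fq F]
    (V : Submodule Fq F) (hV : (V : Set F).Finite)
    (k : ℕ) (hk : 1 ≤ k) (hdvd : ¬ (q - 1) ∣ k) :
    ∑ᶠ v ∈ ((V : Set F) \ {0}), (v ^ k)⁻¹ = 0 := by
  classical
  have hcard : Fintype.card Fqˣ = q - 1 := by rw [Fintype.card_units, hq]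
  obtain ⟨g, hg⟩ := IsCyclic.exists_generator (α := Fqˣ)
  have hog : orderOf g = q - 1 := by
    rw [orderOf_eq_card_of_forall_mem_zpowers hg, Nat.card_eq_fintype_card, hcard]
  have hgk : g ^ k ≠ 1 := fun h => hdvd (hog ▸ orderOf_dvd_of_pow_eq_one h)
  set c' : F := algebraMap Fq F (g : Fq) with hc'
  have hc0 : c' ≠ 0 := by
    simp only [hc', ne_eq, map_eq_zero, Units.ne_zero, not_false_eq_true]
  have hck : c' ^ k ≠ 1 := by
    intro h
    apply hgk
    have h1 : (algebraMap Fq F) ((g : Fq) ^ k) = algebraMap Fq F 1 := by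
      simpa [map_pow] using h
    have h2 : ((g : Fq) ^ k) = 1 := (algebraMap Fq F).injective h1
    exact Units.ext (by simpa using h2)
  set s : Set F := (V : Set F) \ {0} with hs
  have hsfin : s.Finite := hV.diff
  have hbij : Set.BijOn (fun v => c' * v) s s := by
    refine ⟨fun v hv => ⟨?_, ?_⟩, fun a _ b _ h => mul_left_cancel₀ hc0 h, fun w hw => ?_⟩
    · show c' * v ∈ (V : Set F)
      have h : c' * v = (g : Fq) • v := by simp [Algebra.smul_def, hc']
      rw [h]; exact V.smul_mem _ hv.1
    · show c' * v ∉ ({0} : Set F)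
      simpa using mul_ne_zero hc0 (by simpa using hv.2)
    · refine ⟨c'⁻¹ * w, ⟨⟨?_, ?_⟩, ?_⟩⟩
      · have h : c'⁻¹ * w = ((g : Fq)⁻¹) • w := by
          simp [Algebra.smul_def, hc', map_inv₀]
        rw [h]; exact V.smul_mem _ hw.1
      · exact mul_ne_zero (inv_ne_zero hc0) (by simpa using hw.2)
      · field_simp
  have key : ∑ᶠ v ∈ s, (((fun v => c' * v) v) ^ k)⁻¹ = ∑ᶠ v ∈ s, (v ^ k)⁻¹ :=
    finsum_mem_eq_of_bijOn _ hbij (fun _ _ => rfl)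
  have expand : ∑ᶠ v ∈ s, ((c' * v) ^ k)⁻¹ = (c' ^ k)⁻¹ * ∑ᶠ v ∈ s, (v ^ k)⁻¹ := by
    rw [finsum_mem_eq_finite_toFinset_sum _ hsfin,
      finsum_mem_eq_finite_toFinset_sum _ hsfin, Finset.mul_sum]
    exact Finset.sum_congr rfl fun v _ => by rw [mul_pow, mul_inv]
  set S := ∑ᶠ v ∈ s, (v ^ k)⁻¹ with hS
  have hSS : (c' ^ k)⁻¹ * S = S := by rw [← expand]; exact key
  have hne : (c' ^ k)⁻¹ - 1 ≠ 0 := by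
    intro h
    exact hck (by rw [← inv_inv (c' ^ k), sub_eq_zero.mp h, inv_one])
  have hz : ((c' ^ k)⁻¹ - 1) * S = 0 := by rw [sub_mul, hSS, one_mul, sub_self]
  rcases mul_eq_zero.mp hz with h | h
  · exact absurd h hne
  · exact h
end

section
/- Let p be a prime, q a power of p, and F_q the field with q elements. For every k ≥ 1 there exists a polynomial F_k ∈ F_q[T][X_1, …, X_k] with the following property: for every field extension F of F_q, every F_q-algebra homomorphism φ : F_q[T] → F with t = φ(T), every s ≥ 1, every g_1, …, g_s ∈ F and every sequence (e_i)_{i≥0} in F with e_0 = 1 satisfying the formal power series identity e(t·z) = t·e(z) + ∑_{j=1}^{s} g_j e(z)^{q^j} in F[[z]] (where e(z) = ∑_{i≥0} e_i z^{q^i}), one has g_k = (φ F_k)(e_1, …, e_k), i.e. the image under φ of the coefficients of F_k evaluated at (e_1, …, e_k) equals g_k (with g_k interpreted as 0 for k > s). -/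
open PowerSeries

/- There is a universal polynomial `F_k ∈ F_q[T][X_1, …, X_k]` expressing the Drinfeld
module coefficient `g_k` in terms of the exponential coefficients `e_1, …, e_k`. -/
theorem my_coeff_pow_char {R : Type*} [CommRing R] (p : ℕ) [Fact p.Prime] [CharP R p] (f : R⟦X⟧) (n : ℕ) :
    coeff n (f ^ p) = if p ∣ n then (coeff (n / p) f) ^ p else 0 := by
  set T : Polynomial R := trunc (n + 1) f with hT
  have hdvd : (X : R⟦X⟧) ^ (n + 1) ∣ f - (T : R⟦X⟧) := by
    rw [X_pow_dvd_iff]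
    intro m hm
    simp [hT, Polynomial.coeff_coe, coeff_trunc, hm]
  have h2 : (X : R⟦X⟧) ^ (n + 1) ∣ f ^ p - (T : R⟦X⟧) ^ p :=
    hdvd.trans (sub_dvd_pow_sub_pow _ _ p)
  have h3 : coeff n (f ^ p) = coeff n ((T : R⟦X⟧) ^ p) := by
    have := (X_pow_dvd_iff.mp h2) n (by omega)
    rw [map_sub, sub_eq_zero] at this
    exact this
  rw [h3, ← Polynomial.coe_pow, Polynomial.coeff_coe]
  rw [← Polynomial.map_frobenius_expand (p := p) T, Polynomial.coeff_map, Polynomial.coeff_expand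
    (Fact.out : p.Prime).pos]
  split_ifs with h
  · rw [frobenius_def, hT, coeff_trunc]
    rw [if_pos (Nat.lt_succ_of_le (Nat.div_le_self n p))]
  · simp

theorem my_coeff_pow_char_pow {R : Type*} [CommRing R] (p : ℕ) [Fact p.Prime] [CharP R p] (f : R⟦X⟧) (l n : ℕ) :
    coeff n (f ^ p ^ l) = if p ^ l ∣ n then (coeff (n / p ^ l) f) ^ p ^ l else 0 := by
  induction l generalizing n with
  | zero => simp
  | succ l ih =>
    have hp : 0 < p := (Fact.out : Nat.Prime p).pos
    rw [pow_succ, pow_mul, my_coeff_pow_char p (f ^ p ^ l) n]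
    by_cases h1 : p ∣ n
    · rw [if_pos h1, ih]
      have h3 : p ^ l ∣ n / p ↔ p * p ^ l ∣ n := Nat.dvd_div_iff_mul_dvd h1
      by_cases h2 : p ^ l * p ∣ n
      · rw [if_pos (h3.mpr (by rwa [mul_comm] at h2)), if_pos h2, ← pow_mul,
          Nat.div_div_eq_div_mul, mul_comm p (p ^ l)]
      · rw [if_neg (fun h => h2 (by rw [mul_comm]; exact h3.mp h)), if_neg h2,
          zero_pow hp.ne']
    · rw [if_neg h1, if_neg (fun h => h1 ((dvd_mul_left p (p ^ l)).trans h))]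

universe u
noncomputable def auxG (Fq : Type u) [Field Fq] (q : ℕ) (n : ℕ) :
    MvPolynomial ℕ (Polynomial Fq) :=
  MvPolynomial.C (Polynomial.X ^ q ^ n - Polynomial.X) * MvPolynomial.X n -
      Finset.sum (Finset.Icc 1 (n - 1)).attach
        (fun j => auxG Fq q j.1 * (MvPolynomial.X (n - j.1)) ^ q ^ j.1)
  termination_by n
  decreasing_by
    have := Finset.mem_Icc.mp j.2; omega

theorem auxG_eq (Fq : Type*) [Field Fq] (q : ℕ) (n : ℕ) :
    auxG Fq q n = MvPolynomial.C (Polynomial.X ^ q ^ n - Polynomial.X) * MvPolynomial.X n -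
      ∑ j ∈ Finset.Icc 1 (n - 1), auxG Fq q j * (MvPolynomial.X (n - j)) ^ q ^ j := by
  rw [auxG]
  congr 1
  exact Finset.sum_attach (Finset.Icc 1 (n - 1))
    (fun j => auxG Fq q j * (MvPolynomial.X (n - j)) ^ q ^ j)

theorem drinfeld_coeff_universal_polynomial
    (Fq : Type*) [Field Fq] [Fintype Fq] (q : ℕ) (hq : Fintype.card Fq = q)
    (k : ℕ) (hk : 1 ≤ k) :
    ∃ Fk : MvPolynomial (Fin k) (Polynomial Fq),
      ∀ (F : Type) [Field F] [Algebra Fq F] (φ : Polynomial Fq →ₐ[Fq] F)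
        (s : ℕ) (_ : 1 ≤ s)
        (g : ℕ → F) (_ : ∀ j, s < j → g j = 0)
        (e : ℕ → F) (_ : e 0 = 1)
        (E : PowerSeries F)
        (_ : ∀ i, PowerSeries.coeff (q ^ i) E = e i)
        (_ : ∀ m, (∀ i, m ≠ q ^ i) → PowerSeries.coeff m E = 0)
        (_ : PowerSeries.rescale (φ Polynomial.X) E
            = PowerSeries.C (φ Polynomial.X) * E
              + ∑ j ∈ Finset.Icc 1 s, PowerSeries.C (g j) * E ^ q ^ j),
        g k = MvPolynomial.eval (fun i : Fin k => e (i.1 + 1))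
                (MvPolynomial.map (φ : Polynomial Fq →+* F) Fk) := by
  classical
  set p := ringChar Fq with hpdef
  haveI : CharP Fq p := ringChar.charP Fq
  have hp : p.Prime := CharP.char_is_prime Fq p
  haveI : Fact p.Prime := ⟨hp⟩
  obtain ⟨m, -, hpm⟩ := FiniteField.card Fq p
  have hq' : q = p ^ (m : ℕ) := by rw [← hq, hpm]
  have hq1 : 1 < q := by rw [← hq]; exact Fintype.one_lt_card
  refine ⟨MvPolynomial.rename (fun n : ℕ => (⟨min (n - 1) (k - 1), by omega⟩ : Fin k))
      (auxG Fq q k), ?_⟩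
  intro F _ _ φ s hs g hg e he0 E hE1 hE2 hfe
  haveI : CharP F p := charP_of_injective_algebraMap (algebraMap Fq F).injective p
  set t := φ Polynomial.X with ht
  -- coefficients of powers of E
  have hpow : ∀ j : ℕ, p ^ ((m : ℕ) * j) = q ^ j := by
    intro j; rw [hq', ← pow_mul]
  have hcoe : ∀ j n : ℕ, j ≤ n →
      PowerSeries.coeff (q ^ n) (E ^ q ^ j) = (e (n - j)) ^ q ^ j := by
    intro j n hjn
    have h1 : E ^ q ^ j = E ^ p ^ ((m : ℕ) * j) := by rw [hpow]
    rw [h1, my_coeff_pow_char_pow p E ((m : ℕ) * j) (q ^ n), hpow,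
      if_pos (pow_dvd_pow q hjn), Nat.pow_div hjn (by omega), hE1]
  have hcoe0 : ∀ j n : ℕ, n < j →
      PowerSeries.coeff (q ^ n) (E ^ q ^ j) = 0 := by
    intro j n hnj
    have h1 : E ^ q ^ j = E ^ p ^ ((m : ℕ) * j) := by rw [hpow]
    rw [h1, my_coeff_pow_char_pow p E ((m : ℕ) * j) (q ^ n), hpow, if_neg]
    intro hdvd
    have h2 := Nat.le_of_dvd (by positivity) hdvd
    exact absurd (Nat.pow_lt_pow_right hq1 hnj) (not_lt.mpr h2)
  -- key coefficient identity
  have hkey : ∀ n, 1 ≤ n →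
      t ^ q ^ n * e n = t * e n + ∑ j ∈ Finset.Icc 1 n, g j * (e (n - j)) ^ q ^ j := by
    intro n hn
    have h0 := congrArg (PowerSeries.coeff (q ^ n)) hfe
    simp only [PowerSeries.coeff_rescale, map_add, map_sum, PowerSeries.coeff_C_mul,
      hE1] at h0
    rw [h0]
    congr 1
    have hstep1 : ∑ j ∈ Finset.Icc 1 s, g j * PowerSeries.coeff (q ^ n) (E ^ q ^ j)
        = ∑ j ∈ Finset.Icc 1 (s + n), g j * PowerSeries.coeff (q ^ n) (E ^ q ^ j) := by
      refine Finset.sum_subset (Finset.Icc_subset_Icc_right (by omega)) ?_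
      intro j hj hj'
      rw [hg j (by simp only [Finset.mem_Icc] at hj hj' ⊢; omega), zero_mul]
    have hstep2 : ∑ j ∈ Finset.Icc 1 n, g j * PowerSeries.coeff (q ^ n) (E ^ q ^ j)
        = ∑ j ∈ Finset.Icc 1 (s + n), g j * PowerSeries.coeff (q ^ n) (E ^ q ^ j) := by
      refine Finset.sum_subset (Finset.Icc_subset_Icc_right (by omega)) ?_
      intro j hj hj'
      rw [hcoe0 j n (by simp only [Finset.mem_Icc] at hj hj' ⊢; omega), mul_zero]
    rw [hstep1, ← hstep2]
    refine Finset.sum_congr rfl fun j hj => ?_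
    rw [hcoe j n (by simp only [Finset.mem_Icc] at hj; omega)]
  -- the recursion for g
  have hrec : ∀ n, 1 ≤ n →
      g n = (t ^ q ^ n - t) * e n
        - ∑ j ∈ Finset.Icc 1 (n - 1), g j * (e (n - j)) ^ q ^ j := by
    intro n hn
    obtain ⟨n', rfl⟩ : ∃ n', n = n' + 1 := ⟨n - 1, by omega⟩
    have h := hkey (n' + 1) hn
    rw [Finset.sum_Icc_succ_top (by omega : 1 ≤ n' + 1)] at h
    simp only [Nat.add_sub_cancel] at h ⊢
    rw [Nat.sub_self, he0, one_pow, mul_one] at h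
    linear_combination -h
  -- universal evaluation by strong induction
  have main : ∀ n : ℕ, 1 ≤ n → ∀ w : ℕ → F, (∀ i, 1 ≤ i → i ≤ n → w i = e i) →
      MvPolynomial.eval w
        (MvPolynomial.map (φ : Polynomial Fq →+* F) (auxG Fq q n)) = g n := by
    intro n
    induction n using Nat.strong_induction_on with
    | _ n ih =>
      intro hn w hw
      rw [auxG_eq, map_sub, map_mul, map_sub, map_mul, MvPolynomial.map_C,
        MvPolynomial.map_X, map_sum]
      simp only [map_mul, map_pow, MvPolynomial.map_X, MvPolynomial.eval_C,
        MvPolynomial.eval_X, map_sum]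
      have hC : ((φ : Polynomial Fq →+* F) (Polynomial.X ^ q ^ n - Polynomial.X)) =
          t ^ q ^ n - t := by
        rw [map_sub, map_pow, ht]; rfl
      rw [hrec n hn]
      rw [hC, hw n hn le_rfl]
      congr 1
      refine Finset.sum_congr rfl fun j hj => ?_
      simp only [Finset.mem_Icc] at hj
      rw [ih j (by omega) (by omega) w (fun i h1 h2 => hw i h1 (by omega)),
        hw (n - j) (by omega) (by omega)]
  rw [MvPolynomial.map_rename, MvPolynomial.eval_rename]
  exact (main k hk _ (fun i h1 h2 => by
    show e (min (i - 1) (k - 1) + 1) = e i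
    congr 1
    omega)).symm
end

section
/- Let p be a prime, q a power of p, and F_q the field with q elements. For every k ≥ 1 there exists a polynomial G_k ∈ F_q[X_1, …, X_k] with the following property: for every field extension F of F_q and all sequences (e_i)_{i≥0}, (E_j)_{j≥0} in F with e_0 = 1, E_0 = −1, satisfying (i) (∑_{i≥0} e_i z^{q^i − 1}) · (∑_{j≥0} E_j z^j) = −1 in F[[z]] and (ii) E_{jq} = E_j^q for all j ≥ 0, one has e_k = G_k(E_{q−1}, E_{q^2−1}, …, E_{q^k−1}). -/
open PowerSeries

private theorem aux_univ (Fq : Type*) [CommSemiring Fq] (q : ℕ) (hq : 2 ≤ q) (k : ℕ) :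
    ∃ Gk : MvPolynomial (Fin k) Fq,
      ∀ (F : Type) [Field F] [Algebra Fq F]
        (e Eis : ℕ → F) (_ : e 0 = 1) (_ : Eis 0 = -1)
        (D : PowerSeries F)
        (_ : ∀ i, PowerSeries.coeff (R := F) (q ^ i - 1) D = e i)
        (_ : ∀ m, (∀ i, m ≠ q ^ i - 1) → PowerSeries.coeff (R := F) m D = 0)
        (_ : D * PowerSeries.mk Eis = -1)
        (_ : ∀ j, Eis (j * q) = Eis j ^ q),
        e k = MvPolynomial.eval (fun i : Fin k => Eis (q ^ (i.1 + 1) - 1))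
                (MvPolynomial.map (algebraMap Fq F) Gk) := by
  induction k using Nat.strong_induction_on with
  | _ k ih =>
  rcases Nat.eq_zero_or_pos k with rfl | hk
  · exact ⟨1, by intro F _ _ e Eis he0 _ _ _ _ _ _; simp [he0]⟩
  choose G hG using ih
  refine ⟨∑ i ∈ (Finset.range k).attach,
      (MvPolynomial.rename (Fin.castLE (Nat.le_of_lt (Finset.mem_range.mp i.2)))
        (G i.1 (Finset.mem_range.mp i.2))) *
      (MvPolynomial.X (⟨k - 1 - i.1, by omega⟩ : Fin k)) ^ (q ^ i.1), ?_⟩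
  intro F _ _ e Eis he0 hE0 D hD1 hD2 hmul hfrob
  have hpos : ∀ i : ℕ, 1 ≤ q ^ i := fun i => Nat.one_le_pow _ _ (by omega)
  have hmono : ∀ i ≤ k, q ^ i ≤ q ^ k := fun i hi => Nat.pow_le_pow_right (by omega) hi
  have hEpow : ∀ j i : ℕ, Eis (j * q ^ i) = Eis j ^ q ^ i := by
    intro j i
    induction i with
    | zero => simp
    | succ i ihh =>
      have h : j * q ^ (i + 1) = (j * q ^ i) * q := by ring
      rw [h, hfrob, ihh, ← pow_mul, ← pow_succ]
  have hsum0 : ∑ i ∈ Finset.range (k + 1), e i * Eis (q ^ k - q ^ i) = 0 := by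
    have hqk : q ≤ q ^ k := Nat.le_self_pow (by omega) q
    have hn : q ^ k - 1 ≠ 0 := by omega
    have hco : PowerSeries.coeff (R := F) (q ^ k - 1) (D * PowerSeries.mk Eis) = 0 := by
      rw [hmul, map_neg, PowerSeries.coeff_one, if_neg hn, neg_zero]
    rw [PowerSeries.coeff_mul] at hco
    have hS : ((Finset.range (k + 1)).image (fun i => (q ^ i - 1, q ^ k - q ^ i)))
        ⊆ Finset.HasAntidiagonal.antidiagonal (q ^ k - 1) := by
      intro p hp
      simp only [Finset.mem_image, Finset.mem_range] at hp
      obtain ⟨i, hi, rfl⟩ := hp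
      have h1 := hmono i (by omega)
      have h2 := hpos i
      simp only [Finset.HasAntidiagonal.mem_antidiagonal]
      omega
    have hsum_eq : ∑ p ∈ Finset.HasAntidiagonal.antidiagonal (q ^ k - 1),
        PowerSeries.coeff (R := F) p.1 D * PowerSeries.coeff (R := F) p.2 (PowerSeries.mk Eis)
        = ∑ p ∈ (Finset.range (k + 1)).image (fun i => (q ^ i - 1, q ^ k - q ^ i)),
        PowerSeries.coeff (R := F) p.1 D * PowerSeries.coeff (R := F) p.2 (PowerSeries.mk Eis) := by
      refine (Finset.sum_subset hS ?_).symm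
      rintro ⟨a, b⟩ hp hnp
      rcases Classical.em (∃ i, a = q ^ i - 1) with ⟨i, rfl⟩ | hne
      · exfalso
        apply hnp
        have hpn := Finset.HasAntidiagonal.mem_antidiagonal.mp hp
        simp only at hpn
        have hik : i ≤ k := by
          by_contra hik
          have h3 : q ^ k < q ^ i := Nat.pow_lt_pow_right (by omega) (by omega)
          have h4 := hpos i
          omega
        have h1 := hmono i hik
        have h2 := hpos i
        refine Finset.mem_image.mpr ⟨i, Finset.mem_range.mpr (by omega), ?_⟩
        have hb : b = q ^ k - q ^ i := by omega
        rw [hb]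
      · push_neg at hne
        rw [hD2 a hne, zero_mul]
    rw [hsum_eq, Finset.sum_image ?inj] at hco
    case inj =>
      intro x hx y hy hxy
      have hx1 := hpos x
      have hy1 := hpos y
      have : q ^ x = q ^ y := by
        have := congrArg Prod.fst hxy
        simp only at this
        omega
      exact Nat.pow_right_injective hq this
    simpa only [hD1, PowerSeries.coeff_mk] using hco
  have hrec : e k = ∑ i ∈ Finset.range k, e i * Eis (q ^ (k - i) - 1) ^ q ^ i := by
    rw [Finset.sum_range_succ, Nat.sub_self, hE0, mul_neg_one] at hsum0
    rw [add_neg_eq_zero] at hsum0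
    have hek : e k = ∑ i ∈ Finset.range k, e i * Eis (q ^ k - q ^ i) := hsum0.symm
    rw [hek]
    refine Finset.sum_congr rfl ?_
    intro i hi
    have hik : i < k := Finset.mem_range.mp hi
    have h2 : q ^ k - q ^ i = (q ^ (k - i) - 1) * q ^ i := by
      have h3 : q ^ (k - i) * q ^ i = q ^ k := by rw [← pow_add]; congr 1; omega
      rw [Nat.sub_mul, h3, one_mul]
    rw [h2, hEpow]
  rw [hrec, ← Finset.sum_attach (Finset.range k)
    (fun i => e i * Eis (q ^ (k - i) - 1) ^ q ^ i)]
  simp only [map_sum, map_mul, map_pow, MvPolynomial.map_rename, MvPolynomial.map_X,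
    MvPolynomial.eval_rename, MvPolynomial.eval_X]
  refine Finset.sum_congr rfl ?_
  rintro ⟨i, hi⟩ -
  have hik : i < k := Finset.mem_range.mp hi
  have h3 : k - 1 - i + 1 = k - i := by omega
  congr 1
  · rw [hG i hik F e Eis he0 hE0 D hD1 hD2 hmul hfrob]
    rfl
  · simp only [h3]

theorem exponential_coeff_universal_polynomial
    (Fq : Type*) [Field Fq] [Fintype Fq] (q : ℕ) (hq : Fintype.card Fq = q)
    (k : ℕ) (hk : 1 ≤ k) :
    ∃ Gk : MvPolynomial (Fin k) Fq,
      ∀ (F : Type) [Field F] [Algebra Fq F]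
        (e Eis : ℕ → F) (_ : e 0 = 1) (_ : Eis 0 = -1)
        (D : PowerSeries F)
        (_ : ∀ i, PowerSeries.coeff (R := F) (q ^ i - 1) D = e i)
        (_ : ∀ m, (∀ i, m ≠ q ^ i - 1) → PowerSeries.coeff (R := F) m D = 0)
        (_ : D * PowerSeries.mk Eis = -1)
        (_ : ∀ j, Eis (j * q) = Eis j ^ q),
        e k = MvPolynomial.eval (fun i : Fin k => Eis (q ^ (i.1 + 1) - 1))
                (MvPolynomial.map (algebraMap Fq F) Gk) := by
  have hq2 : 2 ≤ q := by
    have h := Fintype.one_lt_card (α := Fq)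
    omega
  obtain ⟨Gk, hGk⟩ := aux_univ Fq q hq2 k
  exact ⟨Gk, hGk⟩
end

section
/- Let p be a prime, q a power of p, and F_q the field with q elements. For every k ≥ 1 there exists a polynomial H_k ∈ F_q[T][X_1, …, X_k] with the following property: for every field extension F of F_q, every F_q-algebra homomorphism φ : F_q[T] → F with t = φ(T), every s ≥ 1, all g_1, …, g_s ∈ F, and all sequences (e_i)_{i≥0}, (E_j)_{j≥0} in F with e_0 = 1, E_0 = −1, satisfying (i) e(t·z) = t·e(z) + ∑_{j=1}^{s} g_j e(z)^{q^j} in F[[z]] where e(z) = ∑_{i≥0} e_i z^{q^i}, (ii) (∑_{i≥0} e_i z^{q^i − 1}) · (∑_{j≥0} E_j z^j) = −1 in F[[z]], and (iii) E_{jq} = E_j^q for all j ≥ 0, one has g_k = (φ H_k)(E_{q−1}, E_{q^2−1}, …, E_{q^k−1}) (with g_k interpreted as 0 for k > s). -/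
open PowerSeries

private lemma coeff_mul_high' {F : Type*} [CommRing F] (x h : PowerSeries F) (n : ℕ)
    (hh : ∀ b ≤ n, PowerSeries.coeff b h = 0) :
    PowerSeries.coeff n (x * h) = 0 := by
  rw [PowerSeries.coeff_mul]
  apply Finset.sum_eq_zero
  intro pr hpr
  rw [Finset.HasAntidiagonal.mem_antidiagonal] at hpr
  rw [hh pr.2 (by omega), mul_zero]

private lemma coeff_pow_char' {F : Type*} [CommRing F] (p : ℕ) [hp : Fact p.Prime] [CharP F p]
    (f : PowerSeries F) (n : ℕ) :
    PowerSeries.coeff n (f ^ p) = if p ∣ n then (PowerSeries.coeff (n / p) f) ^ p else 0 := by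
  have hp0 : 0 < p := hp.out.pos
  set g : Polynomial F := PowerSeries.trunc (n+1) f with hg
  have hh : ∀ b ≤ n, PowerSeries.coeff b (f - (g : PowerSeries F)) = 0 := by
    intro b hb
    rw [map_sub, Polynomial.coeff_coe, hg, PowerSeries.coeff_trunc, if_pos (by omega), sub_self]
  have key : PowerSeries.coeff n (f ^ p) = PowerSeries.coeff n ((g : PowerSeries F) ^ p) := by
    have hfg : f = (g : PowerSeries F) + (f - g) := by ring
    rw [hfg, add_pow, map_sum, Finset.sum_range_succ]
    rw [Finset.sum_eq_zero, zero_add]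
    · simp
    · intro i hi
      rw [Finset.mem_range] at hi
      have h1 : (p - i) = (p - i - 1) + 1 := by omega
      rw [h1, pow_succ]
      have h2 : (g:PowerSeries F)^i * ((f - ↑g)^(p-i-1) * (f - ↑g)) * (p.choose i : PowerSeries F)
           = ((g:PowerSeries F)^i * (f - ↑g)^(p-i-1) * (p.choose i : PowerSeries F)) * (f - ↑g) := by
        ring
      rw [h2]
      exact coeff_mul_high' _ _ n hh
  rw [key]
  have hcoe : ((g : PowerSeries F)) ^ p = ((g ^ p : Polynomial F) : PowerSeries F) := by
    push_cast; ring
  rw [hcoe, Polynomial.coeff_coe, ← Polynomial.map_frobenius_expand (p := p) g, Polynomial.coeff_map,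
    Polynomial.coeff_expand hp0, apply_ite (frobenius F p), map_zero]
  by_cases hd : p ∣ n
  · rw [if_pos hd, if_pos hd, frobenius_def, hg, PowerSeries.coeff_trunc,
      if_pos (by have := Nat.div_le_self n p; omega)]
  · rw [if_neg hd, if_neg hd]

private lemma coeff_pow_char_pow' {F : Type*} [CommRing F] (p : ℕ) [hp : Fact p.Prime] [CharP F p]
    (f : PowerSeries F) (r n : ℕ) :
    PowerSeries.coeff n (f ^ p ^ r)
      = if p ^ r ∣ n then (PowerSeries.coeff (n / p ^ r) f) ^ p ^ r else 0 := by
  induction r generalizing n with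
  | zero => simp
  | succ r ih =>
    rw [pow_succ, pow_mul, coeff_pow_char' p]
    by_cases h2 : p ^ r * p ∣ n
    · have h1 : p ∣ n := dvd_trans (dvd_mul_left p (p^r)) h2
      have h3 : p ^ r ∣ n / p := (Nat.dvd_div_iff_mul_dvd h1).mpr (by rwa [mul_comm] at h2)
      rw [if_pos h1, ih, if_pos h3, if_pos h2, ← pow_mul, Nat.div_div_eq_div_mul,
        mul_comm p (p^r)]
    · rw [if_neg h2]
      by_cases h1 : p ∣ n
      · have h3 : ¬ p ^ r ∣ n / p := fun h => h2 (by
          have := (Nat.dvd_div_iff_mul_dvd h1).mp h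
          rwa [mul_comm] at this)
        rw [if_pos h1, ih, if_neg h3, zero_pow hp.out.pos.ne']
      · rw [if_neg h1]

noncomputable def EEp (Fq : Type*) [Field Fq] (q k : ℕ) (hk : 0 < k) :
    ℕ → MvPolynomial (Fin k) (Polynomial Fq)
  | 0 => 1
  | (i+1) => ∑ j ∈ (Finset.range (i+1)).attach,
      EEp Fq q k hk j.1 *
        (MvPolynomial.X ⟨min (i - j.1) (k-1),
          lt_of_le_of_lt (min_le_right _ _) (Nat.sub_lt hk Nat.one_pos)⟩) ^ q ^ j.1
  decreasing_by exact Finset.mem_range.mp j.2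

noncomputable def GGp (Fq : Type*) [Field Fq] (q k : ℕ) (hk : 0 < k) :
    ℕ → MvPolynomial (Fin k) (Polynomial Fq)
  | 0 => 0
  | (j+1) => EEp Fq q k hk (j+1) * MvPolynomial.C (Polynomial.X ^ q ^ (j+1) - Polynomial.X)
      - ∑ i ∈ (Finset.Icc 1 j).attach,
          GGp Fq q k hk i.1 * (EEp Fq q k hk (j + 1 - i.1)) ^ q ^ i.1
  decreasing_by exact Nat.lt_succ_of_le (Finset.mem_Icc.mp i.2).2

/- There is a universal polynomial `H_k ∈ F_q[T][X_1, …, X_k]` expressing the Drinfeld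
module coefficient `g_k` in terms of the Eisenstein coefficients `E_{q-1}, …, E_{q^k-1}`. -/
theorem drinfeld_coeff_eisenstein_universal_polynomial
    (Fq : Type*) [Field Fq] [Fintype Fq] (q : ℕ) (hq : Fintype.card Fq = q)
    (k : ℕ) (hk : 1 ≤ k) :
    ∃ Hk : MvPolynomial (Fin k) (Polynomial Fq),
      ∀ (F : Type) [Field F] [Algebra Fq F] (φ : Polynomial Fq →ₐ[Fq] F)
        (s : ℕ) (_ : 1 ≤ s)
        (g : ℕ → F) (_ : ∀ j, s < j → g j = 0)
        (e Eis : ℕ → F) (_ : e 0 = 1) (_ : Eis 0 = -1)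
        (E : PowerSeries F)
        (_ : ∀ i, PowerSeries.coeff (q ^ i) E = e i)
        (_ : ∀ m, (∀ i, m ≠ q ^ i) → PowerSeries.coeff m E = 0)
        (_ : PowerSeries.rescale (φ Polynomial.X) E
            = PowerSeries.C (φ Polynomial.X) * E
              + ∑ j ∈ Finset.Icc 1 s, PowerSeries.C (g j) * E ^ q ^ j)
        (D : PowerSeries F)
        (_ : ∀ i, PowerSeries.coeff (q ^ i - 1) D = e i)
        (_ : ∀ m, (∀ i, m ≠ q ^ i - 1) → PowerSeries.coeff m D = 0)
        (_ : D * PowerSeries.mk Eis = -1)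
        (_ : ∀ j, Eis (j * q) = Eis j ^ q),
        g k = MvPolynomial.eval (fun i : Fin k => Eis (q ^ (i.1 + 1) - 1))
                (MvPolynomial.map (φ : Polynomial Fq →+* F) Hk) := by
  classical
  have hk' : 0 < k := hk
  have hq2 : 2 ≤ q := by rw [← hq]; exact Fintype.one_lt_card
  set p := ringChar Fq with hpdef
  haveI : CharP Fq p := ringChar.charP Fq
  obtain ⟨m, hp, hcard⟩ := FiniteField.card Fq p
  haveI hpfact : Fact p.Prime := ⟨hp⟩
  have hqpm : q = p ^ (m : ℕ) := by rw [← hq, hcard]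
  refine ⟨GGp Fq q k hk' k, ?_⟩
  intro F _ _ φ s hs g hgs e Eis he0 hEis0 E hE hE0 hfunc D hD hD0 hDE hfrob
  haveI : CharP F p := charP_of_injective_algebraMap (algebraMap Fq F).injective p
  set t := φ Polynomial.X with ht
  set v : Fin k → F := fun i : Fin k => Eis (q ^ (i.1 + 1) - 1) with hv
  set ev := MvPolynomial.eval₂Hom (φ : Polynomial Fq →+* F) v with hev
  -- iterated Frobenius relation
  have hfrob' : ∀ (a j : ℕ), Eis (a * q ^ j) = Eis a ^ q ^ j := by
    intro a j
    induction j with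
    | zero => simp
    | succ j ih => rw [pow_succ, ← mul_assoc, hfrob, ih, ← pow_mul, ← pow_succ]
  -- Fact A : recursion for the e's in terms of the Eis's
  have factA : ∀ i, 1 ≤ i →
      e i = ∑ j ∈ Finset.range i, e j * Eis (q ^ (i - j) - 1) ^ q ^ j := by
    intro i hi
    have hq1 : 1 ≤ q ^ i := Nat.one_le_pow _ _ (by omega)
    have hqi : q ≤ q ^ i := by
      calc q = q ^ 1 := (pow_one q).symm
      _ ≤ q ^ i := Nat.pow_le_pow_right (by omega) hi
    have hne : q ^ i - 1 ≠ 0 := by omega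
    have h0 : ∑ pr ∈ Finset.HasAntidiagonal.antidiagonal (q ^ i - 1),
        PowerSeries.coeff pr.1 D * Eis pr.2 = 0 := by
      have h := congrArg (PowerSeries.coeff (q ^ i - 1)) hDE
      rw [PowerSeries.coeff_mul, map_neg, PowerSeries.coeff_one, if_neg hne, neg_zero] at h
      simpa [PowerSeries.coeff_mk] using h
    have hS : ∑ pr ∈ Finset.HasAntidiagonal.antidiagonal (q ^ i - 1),
        PowerSeries.coeff pr.1 D * Eis pr.2
        = ∑ j ∈ Finset.range (i+1), PowerSeries.coeff (q ^ j - 1) D * Eis (q ^ i - q ^ j) := by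
      have hsub : (Finset.range (i+1)).image (fun j => (q ^ j - 1, q ^ i - q ^ j))
          ⊆ Finset.HasAntidiagonal.antidiagonal (q ^ i - 1) := by
        intro pr hpr
        simp only [Finset.mem_image, Finset.mem_range] at hpr
        obtain ⟨j, hj, rfl⟩ := hpr
        have h1 : 1 ≤ q ^ j := Nat.one_le_pow _ _ (by omega)
        have h2 : q ^ j ≤ q ^ i := Nat.pow_le_pow_right (by omega) (by omega)
        rw [Finset.HasAntidiagonal.mem_antidiagonal]
        omega
      have hzero : ∀ pr ∈ Finset.HasAntidiagonal.antidiagonal (q ^ i - 1),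
          pr ∉ (Finset.range (i+1)).image (fun j => (q ^ j - 1, q ^ i - q ^ j)) →
          PowerSeries.coeff pr.1 D * Eis pr.2 = 0 := by
        intro pr hpr hnot
        rw [Finset.HasAntidiagonal.mem_antidiagonal] at hpr
        rw [hD0 pr.1, zero_mul]
        intro i' hi'
        apply hnot
        have h1 : 1 ≤ q ^ i' := Nat.one_le_pow _ _ (by omega)
        have h2 : q ^ i' ≤ q ^ i := by omega
        have h3 : i' ≤ i := (Nat.pow_le_pow_iff_right hq2).mp h2
        simp only [Finset.mem_image, Finset.mem_range]
        refine ⟨i', by omega, ?_⟩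
        have e1 : q ^ i' - 1 = pr.1 := hi'.symm
        have e2 : q ^ i - q ^ i' = pr.2 := by omega
        exact Prod.ext e1 e2
      rw [← Finset.sum_subset hsub hzero, Finset.sum_image]
      intro x hx y hy hxy
      rw [Finset.mem_coe, Finset.mem_range] at hx hy
      have h1 : 1 ≤ q ^ x := Nat.one_le_pow _ _ (by omega)
      have h1' : 1 ≤ q ^ y := Nat.one_le_pow _ _ (by omega)
      have hfst : q ^ x - 1 = q ^ y - 1 := congrArg Prod.fst hxy
      have : q ^ x = q ^ y := by omega
      exact Nat.pow_right_injective hq2 this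
    rw [hS] at h0
    simp only [hD] at h0
    rw [Finset.sum_range_succ, Nat.sub_self, hEis0] at h0
    have hEq : ∀ j ∈ Finset.range i,
        e j * Eis (q ^ i - q ^ j) = e j * Eis (q ^ (i - j) - 1) ^ q ^ j := by
      intro j hj
      rw [Finset.mem_range] at hj
      have hpow : (q ^ (i - j) - 1) * q ^ j = q ^ i - q ^ j := by
        have h1 : q ^ (i - j) * q ^ j = q ^ i := by rw [← pow_add]; congr 1; omega
        have h2 : 1 ≤ q ^ (i - j) := Nat.one_le_pow _ _ (by omega)
        rw [Nat.sub_mul]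
        omega
      rw [← hpow, hfrob']
    rw [Finset.sum_congr rfl hEq] at h0
    linear_combination -h0
  -- coefficients of powers of E
  have hcoeffE : ∀ (j j' : ℕ), PowerSeries.coeff (q ^ j) (E ^ q ^ j')
      = if j' ≤ j then e (j - j') ^ q ^ j' else 0 := by
    intro j j'
    have hqq : q ^ j' = p ^ (m * j') := by rw [hqpm, ← pow_mul]
    rw [hqq, coeff_pow_char_pow', ← hqq]
    by_cases h : j' ≤ j
    · rw [if_pos (pow_dvd_pow q h), Nat.pow_div h (by omega), hE, if_pos h]
    · have hnd : ¬ q ^ j' ∣ q ^ j := by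
        intro hdvd
        have h2 : q ^ j' ≤ q ^ j := Nat.le_of_dvd (pow_pos (by omega) j) hdvd
        exact h ((Nat.pow_le_pow_iff_right hq2).mp h2)
      rw [if_neg hnd, if_neg h]
  -- Fact B : recursion for the g's
  have factB : ∀ j₀ : ℕ, g (j₀+1) = e (j₀+1) * (t ^ q ^ (j₀+1) - t)
      - ∑ i ∈ Finset.Icc 1 j₀, g i * e (j₀ + 1 - i) ^ q ^ i := by
    intro j₀
    set j := j₀ + 1 with hj
    have hcoef := congrArg (PowerSeries.coeff (q ^ j)) hfunc
    rw [PowerSeries.coeff_rescale, hE, map_add, map_sum] at hcoef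
    simp only [PowerSeries.coeff_C_mul, hE, hcoeffE] at hcoef
    have e1 : ∑ i ∈ Finset.Icc 1 s, g i * (if i ≤ j then e (j - i) ^ q ^ i else 0)
        = ∑ i ∈ Finset.Icc 1 (max s j), g i * (if i ≤ j then e (j - i) ^ q ^ i else 0) :=
      Finset.sum_subset (Finset.Icc_subset_Icc_right (le_max_left s j)) (by
        intro x hx hnx
        rw [Finset.mem_Icc] at hx hnx
        rw [hgs x (by omega), zero_mul])
    have e2 : ∑ i ∈ Finset.Icc 1 j, g i * (if i ≤ j then e (j - i) ^ q ^ i else 0)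
        = ∑ i ∈ Finset.Icc 1 (max s j), g i * (if i ≤ j then e (j - i) ^ q ^ i else 0) :=
      Finset.sum_subset (Finset.Icc_subset_Icc_right (le_max_right s j)) (by
        intro x hx hnx
        rw [Finset.mem_Icc] at hx hnx
        rw [if_neg (by omega), mul_zero])
    rw [e1, ← e2] at hcoef
    have hsum3 : ∑ i ∈ Finset.Icc 1 j, g i * (if i ≤ j then e (j - i) ^ q ^ i else 0)
        = (∑ i ∈ Finset.Icc 1 j₀, g i * e (j - i) ^ q ^ i) + g j := by
      rw [hj, Finset.sum_Icc_succ_top (by omega)]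
      congr 1
      · refine Finset.sum_congr rfl fun x hx => ?_
        rw [Finset.mem_Icc] at hx
        rw [if_pos (by omega)]
      · rw [if_pos le_rfl, Nat.sub_self, he0, one_pow, mul_one]
    rw [hsum3] at hcoef
    linear_combination -hcoef
  -- evaluation of the universal polynomials
  have evEE : ∀ i, i ≤ k → ev (EEp Fq q k hk' i) = e i := by
    intro i
    induction i using Nat.strong_induction_on with
    | _ i ih =>
      cases i with
      | zero => intro _; rw [EEp, map_one, he0]
      | succ i =>
        intro hik
        rw [EEp, map_sum, factA (i+1) (by omega),
          ← Finset.sum_attach (Finset.range (i+1))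
            (fun j => e j * Eis (q ^ (i + 1 - j) - 1) ^ q ^ j)]
        refine Finset.sum_congr rfl fun jj _ => ?_
        obtain ⟨j, hj⟩ := jj
        rw [Finset.mem_range] at hj
        rw [map_mul, map_pow, ih j (by omega) (by omega)]
        congr 2
        rw [hev, MvPolynomial.eval₂Hom_X', hv]
        have hmin : min (i - j) (k-1) + 1 = i + 1 - j := by omega
        simp only [hmin]
  have evGG : ∀ j, j ≤ k → 1 ≤ j → ev (GGp Fq q k hk' j) = g j := by
    intro j
    induction j using Nat.strong_induction_on with
    | _ j ih =>
      intro hjk hj1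
      obtain ⟨j₀, rfl⟩ : ∃ j₀, j = j₀ + 1 := ⟨j - 1, by omega⟩
      rw [GGp, map_sub, map_mul, factB j₀]
      congr 1
      · rw [evEE _ hjk]
        congr 1
        rw [hev, MvPolynomial.eval₂Hom_C, map_sub, map_pow, ht]
        rfl
      · rw [map_sum, ← Finset.sum_attach (Finset.Icc 1 j₀)
            (fun i => g i * e (j₀ + 1 - i) ^ q ^ i)]
        refine Finset.sum_congr rfl fun xx _ => ?_
        obtain ⟨x, hx⟩ := xx
        rw [Finset.mem_Icc] at hx
        rw [map_mul, map_pow, ih x (by omega) (by omega) (by omega), evEE _ (by omega)]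
  rw [MvPolynomial.eval_map, ← MvPolynomial.coe_eval₂Hom]
  exact (evGG k le_rfl hk).symm
end
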